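/- arXiv:1701.08733 — 3 statements merged into one kernel-verified Lean document; each statement's English description precedes it below -/
import Mathlib

section
/- Let K be a finite extension of ℚ_p with valuation v_p normalized by v_p(p) = 1, and let x ∈ K with v_p(x) > 0. Then for every integer i ≥ 0 the evaluation π_i(x) ∈ K of the power series π_i(T) at T = x converges, and v_p(π_i(x)) = v_p((1+x)^{p^i} − 1), both sides being ∞ exactly when (1+x)^{p^i} = 1. -/
open PowerSeries

noncomputable section

open scoped Classical in
/-- The series ℓ(T) = ∑_{i≥0} T^{p^i}/p^i over ℚ. -/
def lseries (p : ℕ) : PowerSeries ℚ :=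
  PowerSeries.mk fun n => if ∃ i : ℕ, n = p ^ i then (n : ℚ)⁻¹ else 0

/-- Substitution `f(g)` of a power series `g` with zero constant coefficient
into a power series `f`. -/
def psComp {R : Type*} [CommSemiring R] (g f : PowerSeries R) : PowerSeries R :=
  PowerSeries.mk fun n =>
    ∑ k ∈ Finset.range (n + 1), PowerSeries.coeff k f * PowerSeries.coeff n (g ^ k)

/-- The Artin–Hasse exponential E(T) = exp(∑ T^{p^i}/p^i) over ℚ. -/
def artinHasse (p : ℕ) : PowerSeries ℚ := psComp (lseries p) (PowerSeries.exp ℚ)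

variable (p : ℕ) [Fact p.Prime]

/-- The property that `Ep` is the Artin–Hasse exponential regarded as a power
series with coefficients in `ℤ_p` (its coefficients lie in `ℤ_(p) ⊆ ℤ_p`). -/
def IsArtinHasseZp (Ep : PowerSeries ℤ_[p]) : Prop :=
  PowerSeries.map (PadicInt.Coe.ringHom) Ep
    = PowerSeries.map (Rat.castHom ℚ_[p]) (artinHasse p)

/-- The property that `πfam i` is the power series `π_i(T) ∈ T·ℤ_p[[T]]`
with `E(π_i(T)) = (1+T)^{p^i}`. -/
def IsPiFamily (Ep : PowerSeries ℤ_[p]) (πfam : ℕ → PowerSeries ℤ_[p]) : Prop :=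
  ∀ i : ℕ, PowerSeries.constantCoeff (πfam i) = 0
    ∧ psComp (πfam i) Ep = (1 + X) ^ p ^ i

lemma aux_coeff_pow_eq_zero {R : Type*} [CommRing R] {f : PowerSeries R}
    (h : PowerSeries.constantCoeff f = 0) {k n : ℕ} (hn : n < k) :
    PowerSeries.coeff n (f ^ k) = 0 := by
  obtain ⟨g, hg⟩ := PowerSeries.X_dvd_iff.mpr h
  rw [hg, mul_pow, PowerSeries.coeff_X_pow_mul', if_neg (not_le.mpr hn)]

set_option maxHeartbeats 2000000 in
/-- let `K` be a finite extension of `ℚ_p` (a complete nonarchimedean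
normed field, isometrically containing `ℚ_p`), with valuation `v` normalized by
`v(p) = 1` (given together with its characterizing properties).  For `x ∈ K` with
`v(x) > 0` and every `i ≥ 0`, the evaluation `π_i(x)` converges and
`v(π_i(x)) = v((1+x)^{p^i} − 1)`, both sides being `∞` exactly when `(1+x)^{p^i} = 1`. -/
theorem statement3
    (Ep : PowerSeries ℤ_[p]) (hEp : IsArtinHasseZp p Ep)
    (πfam : ℕ → PowerSeries ℤ_[p]) (hπ : IsPiFamily p Ep πfam)
    (K : Type*) [NormedField K] [CompleteSpace K]
    [Algebra ℚ_[p] K] [FiniteDimensional ℚ_[p] K]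
    (hiso : ∀ y : ℚ_[p], ‖algebraMap ℚ_[p] K y‖ = ‖y‖)
    (v : K → WithTop ℚ)
    (hv0 : ∀ y : K, v y = ⊤ ↔ y = 0)
    (hvmul : ∀ y z : K, v (y * z) = v y + v z)
    (hvadd : ∀ y z : K, min (v y) (v z) ≤ v (y + z))
    (hvp : v ((p : K)) = 1)
    (hvnorm : ∀ y z : K, v y ≤ v z ↔ ‖z‖ ≤ ‖y‖)
    (x : K) (hx : 0 < v x) (i : ℕ) :
    Summable (fun j : ℕ =>
      algebraMap ℚ_[p] K (PadicInt.Coe.ringHom (PowerSeries.coeff j (πfam i))) * x ^ j)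
    ∧ v (∑' j : ℕ,
        algebraMap ℚ_[p] K (PadicInt.Coe.ringHom (PowerSeries.coeff j (πfam i))) * x ^ j)
        = v ((1 + x) ^ p ^ i - 1)
    ∧ (v (∑' j : ℕ,
        algebraMap ℚ_[p] K (PadicInt.Coe.ringHom (PowerSeries.coeff j (πfam i))) * x ^ j)
          = ⊤ ↔ (1 + x) ^ p ^ i = 1) := by
  classical
  obtain ⟨hπ0, hπE⟩ := hπ i
  set π : PowerSeries ℤ_[p] := πfam i with hπdef
  set c : ℤ_[p] →+* K := (algebraMap ℚ_[p] K).comp PadicInt.Coe.ringHom with hcdef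
  have hcnorm : ∀ a : ℤ_[p], ‖c a‖ = ‖a‖ := fun a => by
    rw [hcdef, RingHom.comp_apply, hiso]
    exact PadicInt.padic_norm_e_of_padicInt a
  have hc1 : ∀ a : ℤ_[p], ‖c a‖ ≤ 1 := fun a => (hcnorm a).le.trans (PadicInt.norm_le_one a)
  simp only [show ∀ a : ℤ_[p], algebraMap ℚ_[p] K (PadicInt.Coe.ringHom a) = c a from
    fun a => by rw [hcdef]; rfl]
  -- basic facts about v
  have hv1 : v (1 : K) = 0 := by
    have h := hvmul 1 1
    rw [one_mul] at h
    rcases eq_or_ne (v (1 : K)) ⊤ with h1 | h1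
    · exact absurd ((hv0 1).mp h1) one_ne_zero
    · obtain ⟨q, hq⟩ := WithTop.ne_top_iff_exists.mp h1
      rw [← hq] at h ⊢
      rw [← WithTop.coe_add] at h
      have hq2 : q = q + q := by exact_mod_cast h
      have hq3 : q = 0 := by linarith
      exact_mod_cast hq3
  have hvneg : ∀ y : K, v (-y) = v y := by
    have hm : v (-1 : K) = 0 := by
      have h := hvmul (-1 : K) (-1)
      rw [neg_mul_neg, one_mul, hv1] at h
      rcases eq_or_ne (v (-1 : K)) ⊤ with h1 | h1
      · exact absurd ((hv0 _).mp h1) (by norm_num)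
      · obtain ⟨q, hq⟩ := WithTop.ne_top_iff_exists.mp h1
        rw [← hq] at h ⊢
        rw [← WithTop.coe_add] at h
        have hq2 : q + q = 0 := by exact_mod_cast h.symm
        have hq3 : q = 0 := by linarith
        exact_mod_cast hq3
    intro y
    calc v (-y) = v ((-1) * y) := by rw [neg_one_mul]
      _ = v (-1 : K) + v y := hvmul _ _
      _ = v y := by rw [hm, zero_add]
  have hvlt : ∀ y z : K, v y < v z ↔ ‖z‖ < ‖y‖ := by
    intro y z
    simp only [lt_iff_not_ge]
    exact not_congr (hvnorm z y)
  have hr1 : ‖x‖ < 1 := by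
    have := (hvlt 1 x).mp (by rw [hv1]; exact hx)
    simpa using this
  have hr0 : (0:ℝ) ≤ ‖x‖ := norm_nonneg x
  -- ultrametric
  have hna : ∀ y z : K, ‖y + z‖ ≤ max ‖y‖ ‖z‖ := by
    intro y z
    rcases le_total (v y) (v z) with h | h
    · have h2 := hvadd y z
      rw [min_eq_left h] at h2
      exact ((hvnorm y (y+z)).mp h2).trans (le_max_left _ _)
    · have h2 := hvadd y z
      rw [min_eq_right h] at h2
      exact ((hvnorm z (y+z)).mp h2).trans (le_max_right _ _)
  haveI : IsUltrametricDist K :=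
    IsUltrametricDist.isUltrametricDist_of_forall_norm_add_le_max_norm hna
  -- summability of evaluations
  have hgeo : Summable fun n : ℕ => ‖x‖ ^ n := summable_geometric_of_lt_one hr0 hr1
  have hSnorm : ∀ g : ℕ → ℤ_[p], Summable fun n => ‖c (g n) * x ^ n‖ := by
    intro g
    refine Summable.of_nonneg_of_le (fun n => norm_nonneg _) (fun n => ?_) hgeo
    rw [norm_mul, norm_pow]
    exact mul_le_of_le_one_left (pow_nonneg hr0 n) (hc1 _)
  have hS : ∀ g : ℕ → ℤ_[p], Summable fun n => c (g n) * x ^ n := fun g => (hSnorm g).of_norm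
  -- the element y = π_i(x)
  set y : K := ∑' n : ℕ, c (PowerSeries.coeff n π) * x ^ n with hy
  -- powers of y
  have hyk : ∀ k : ℕ, y ^ k = ∑' n : ℕ, c (PowerSeries.coeff n (π ^ k)) * x ^ n := by
    intro k
    induction k with
    | zero =>
      rw [pow_zero, pow_zero]
      rw [tsum_eq_single 0 (fun n hn => by simp [PowerSeries.coeff_one, if_neg hn])]
      simp
    | succ k ih =>
      rw [pow_succ', ih, hy,
        tsum_mul_tsum_eq_tsum_sum_antidiagonal_of_summable_norm (hSnorm _) (hSnorm _)]
      refine tsum_congr fun n => ?_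
      rw [pow_succ' π k, PowerSeries.coeff_mul, map_sum, Finset.sum_mul]
      refine Finset.sum_congr rfl fun kl hkl => ?_
      rw [Finset.HasAntidiagonal.mem_antidiagonal] at hkl
      rw [map_mul, ← hkl, pow_add]
      ring
  -- coefficients of Ep
  have hEpc : ∀ j : ℕ, (PadicInt.Coe.ringHom (PowerSeries.coeff j Ep) : ℚ_[p])
      = Rat.castHom ℚ_[p] (PowerSeries.coeff j (artinHasse p)) := by
    intro j
    have h := congrArg (PowerSeries.coeff j) hEp
    simpa [PowerSeries.coeff_map] using h
  have hE0 : PowerSeries.coeff 0 Ep = 1 := by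
    have h0 : PowerSeries.coeff 0 (artinHasse p) = 1 := by simp [artinHasse, psComp, coeff_exp]
    have h := hEpc 0
    rw [h0] at h
    exact Subtype.coe_injective (by simp at h ⊢; exact h)
  have hE1 : PowerSeries.coeff 1 Ep = 1 := by
    have h1 : PowerSeries.coeff 1 (artinHasse p) = 1 := by
      simp [artinHasse, psComp, coeff_exp, Finset.sum_range_succ, lseries]
      exact ⟨0, by simp⟩
    have h := hEpc 1
    rw [h1] at h
    exact Subtype.coe_injective (by simp at h ⊢; exact h)
  -- the double series
  set s : ℝ := Real.sqrt ‖x‖ with hs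
  have hs0 : (0:ℝ) ≤ s := Real.sqrt_nonneg _
  have hs1 : s < 1 := by
    rw [hs, show (1:ℝ) = Real.sqrt 1 by simp]
    exact Real.sqrt_lt_sqrt hr0 hr1
  have hss : s * s = ‖x‖ := Real.mul_self_sqrt hr0
  set F : ℕ × ℕ → K := fun kn =>
    c (PowerSeries.coeff kn.1 Ep) * (c (PowerSeries.coeff kn.2 (π ^ kn.1)) * x ^ kn.2)
    with hF
  have hFle : ∀ kn : ℕ × ℕ, ‖F kn‖ ≤ s ^ kn.1 * s ^ kn.2 := by
    rintro ⟨k, n⟩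
    rcases lt_or_ge n k with h | h
    · rw [hF]
      simp only [aux_coeff_pow_eq_zero hπ0 h]
      simp only [map_zero, zero_mul, mul_zero, norm_zero]
      positivity
    · have h1 : ‖F (k, n)‖ ≤ ‖x‖ ^ n := by
        rw [hF]
        simp only [norm_mul, norm_pow]
        have h2 : ‖c (PowerSeries.coeff n (π ^ k))‖ * ‖x‖ ^ n ≤ ‖x‖ ^ n :=
          mul_le_of_le_one_left (pow_nonneg hr0 n) (hc1 _)
        calc ‖c (PowerSeries.coeff k Ep)‖ *
              (‖c (PowerSeries.coeff n (π ^ k))‖ * ‖x‖ ^ n)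
            ≤ 1 * (‖x‖ ^ n) := by
              exact mul_le_mul (hc1 _) h2 (by positivity) zero_le_one
          _ = ‖x‖ ^ n := one_mul _
      calc ‖F (k, n)‖ ≤ ‖x‖ ^ n := h1
        _ = s ^ n * s ^ n := by rw [← mul_pow, hss]
        _ ≤ s ^ k * s ^ n :=
            mul_le_mul_of_nonneg_right (pow_le_pow_of_le_one hs0 hs1.le h) (pow_nonneg hs0 n)
  have hsgeo : Summable fun n : ℕ => s ^ n := summable_geometric_of_lt_one hs0 hs1
  have hFnormsum : Summable fun kn : ℕ × ℕ => ‖F kn‖ :=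
    Summable.of_nonneg_of_le (fun _ => norm_nonneg _) hFle
      (hsgeo.mul_of_nonneg hsgeo (fun n => pow_nonneg hs0 n) (fun n => pow_nonneg hs0 n))
  have hFsum : Summable F := hFnormsum.of_norm
  have hFk : ∀ k : ℕ, Summable fun n => F (k, n) := by
    intro k
    simp only [hF]
    exact (hS _).mul_left _
  have hFn : ∀ n : ℕ, Summable fun k => F (k, n) := by
    intro n
    refine summable_of_ne_finset_zero (s := Finset.range (n+1)) (fun k hk => ?_)
    have hnk : n < k := by simp only [Finset.mem_range] at hk; omega
    rw [hF]
    simp [aux_coeff_pow_eq_zero hπ0 hnk]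
  have hswap : ∑' k : ℕ, ∑' n : ℕ, F (k, n) = ∑' n : ℕ, ∑' k : ℕ, F (k, n) := by
    refine (Summable.tsum_comm' ?_ hFk hFn).symm
    exact hFsum
  have hEy : ∑' k : ℕ, ∑' n : ℕ, F (k, n)
      = ∑' k : ℕ, c (PowerSeries.coeff k Ep) * y ^ k := by
    refine tsum_congr fun k => ?_
    simp only [hF]
    rw [tsum_mul_left, ← hyk k]
  -- coefficients of (1+X)^N
  have hchoose : ∀ N n : ℕ, PowerSeries.coeff n ((1 + X) ^ N) = (N.choose n : ℤ_[p]) := by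
    intro N n
    have h : ((1 + X : PowerSeries ℤ_[p]))
        = ((1 + Polynomial.X : Polynomial ℤ_[p]) : PowerSeries ℤ_[p]) := by
      simp [Polynomial.coe_add, Polynomial.coe_one, Polynomial.coe_X]
    rw [h, ← Polynomial.coe_pow, Polynomial.coeff_coe, Polynomial.coeff_one_add_X_pow]
  have hbinom : ∑' n : ℕ, ∑' k : ℕ, F (k, n) = (1 + x) ^ p ^ i := by
    have hinner : ∀ n : ℕ, ∑' k : ℕ, F (k, n) = ((p ^ i).choose n : K) * x ^ n := by
      intro n
      rw [tsum_eq_sum (s := Finset.range (n + 1)) (fun k hk => by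
        have hnk : n < k := by simp only [Finset.mem_range] at hk; omega
        rw [hF]; simp [aux_coeff_pow_eq_zero hπ0 hnk])]
      have hterm : ∀ k ∈ Finset.range (n+1), F (k, n)
          = c (PowerSeries.coeff k Ep * PowerSeries.coeff n (π ^ k)) * x ^ n := by
        intro k _
        rw [hF, map_mul]
        ring
      rw [Finset.sum_congr rfl hterm, ← Finset.sum_mul, ← map_sum]
      have hcoeff : (∑ k ∈ Finset.range (n+1),
            PowerSeries.coeff k Ep * PowerSeries.coeff n (π ^ k))
          = ((p ^ i).choose n : ℤ_[p]) := by
        have h1 : (∑ k ∈ Finset.range (n+1),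
              PowerSeries.coeff k Ep * PowerSeries.coeff n (π ^ k))
            = PowerSeries.coeff n (psComp π Ep) := by
          simp [psComp]
        rw [h1, hπE, hchoose]
      rw [hcoeff, map_natCast]
    calc ∑' n : ℕ, ∑' k : ℕ, F (k, n)
        = ∑' n : ℕ, ((p ^ i).choose n : K) * x ^ n := tsum_congr hinner
      _ = ∑ n ∈ Finset.range (p ^ i + 1), ((p ^ i).choose n : K) * x ^ n := by
          refine tsum_eq_sum (fun n hn => ?_)
          have h2 : p ^ i < n := by simp only [Finset.mem_range] at hn; omega
          simp [Nat.choose_eq_zero_of_lt h2]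
      _ = (1 + x) ^ p ^ i := by
          rw [add_comm (1:K) x, add_pow]
          refine Finset.sum_congr rfl fun k _ => ?_
          rw [one_pow, mul_one, mul_comm]
  have hmain : (1 + x) ^ p ^ i = ∑' k : ℕ, c (PowerSeries.coeff k Ep) * y ^ k := by
    rw [← hbinom, ← hswap, hEy]
  -- norm of y
  have hy0c : PowerSeries.coeff 0 π = 0 := by
    rw [PowerSeries.coeff_zero_eq_constantCoeff]; exact hπ0
  have hynorm : ‖y‖ ≤ ‖x‖ := by
    rw [hy]
    refine IsUltrametricDist.norm_tsum_le_of_forall_le_of_nonneg hr0 fun n => ?_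
    match n with
    | 0 => simp [hy0c]
    | (m+1) =>
      have h1 : ‖c (PowerSeries.coeff (m+1) π) * x ^ (m+1)‖ ≤ ‖x‖ ^ (m+1) := by
        rw [norm_mul, norm_pow]
        exact mul_le_of_le_one_left (pow_nonneg hr0 _) (hc1 _)
      exact h1.trans (pow_le_of_le_one hr0 hr1.le (Nat.succ_ne_zero m))
  have hy1 : ‖y‖ < 1 := lt_of_le_of_lt hynorm hr1
  have hgsum : Summable fun k : ℕ => c (PowerSeries.coeff k Ep) * y ^ k := by
    refine Summable.of_norm (Summable.of_nonneg_of_le (fun _ => norm_nonneg _) (fun k => ?_)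
      (summable_geometric_of_lt_one (norm_nonneg y) hy1))
    rw [norm_mul, norm_pow]
    exact mul_le_of_le_one_left (pow_nonneg (norm_nonneg y) _) (hc1 _)
  -- splitting off the first two terms
  set R : K := ∑' k : ℕ, c (PowerSeries.coeff (k + 1 + 1) Ep) * y ^ (k + 1 + 1) with hR
  have hsplit : ∑' k : ℕ, c (PowerSeries.coeff k Ep) * y ^ k = 1 + (y + R) := by
    rw [Summable.tsum_eq_zero_add hgsum]
    congr 1
    · simp [hE0]
    rw [Summable.tsum_eq_zero_add ((summable_nat_add_iff 1).mpr hgsum)]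
    congr 1
    · simp [hE1]
  have hkey : (1 + x) ^ p ^ i - 1 = y + R := by
    rw [hmain, hsplit]; ring
  have hRnorm : ‖R‖ ≤ ‖y‖ * ‖y‖ := by
    rw [hR]
    refine IsUltrametricDist.norm_tsum_le_of_forall_le_of_nonneg
      (mul_nonneg (norm_nonneg y) (norm_nonneg y)) fun k => ?_
    rw [norm_mul, norm_pow]
    calc ‖c (PowerSeries.coeff (k+1+1) Ep)‖ * ‖y‖ ^ (k+1+1)
        ≤ ‖y‖ ^ (k+1+1) := mul_le_of_le_one_left (pow_nonneg (norm_nonneg y) _) (hc1 _)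
      _ ≤ ‖y‖ ^ 2 := pow_le_pow_of_le_one (norm_nonneg y) hy1.le (by omega)
      _ = ‖y‖ * ‖y‖ := by rw [pow_two]
  rcases eq_or_ne y 0 with hy0 | hy0
  · have hR0 : R = 0 := by
      rw [hR]
      convert tsum_zero with k
      rw [hy0, zero_pow (by omega : k + 1 + 1 ≠ 0), mul_zero]
    have hx1 : (1 + x) ^ p ^ i - 1 = 0 := by rw [hkey, hy0, hR0, add_zero]
    refine ⟨hS _, ?_, ?_⟩
    · rw [hy0, hx1]
    · rw [hy0]
      constructor
      · intro _; exact sub_eq_zero.mp hx1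
      · intro _; exact (hv0 0).mpr rfl
  · have hvyt : v y ≠ ⊤ := fun h => hy0 ((hv0 y).mp h)
    have hvylt : v y < v R := by
      rw [hvlt]
      calc ‖R‖ ≤ ‖y‖ * ‖y‖ := hRnorm
        _ < 1 * ‖y‖ := mul_lt_mul_of_pos_right hy1 (norm_pos_iff.mpr hy0)
        _ = ‖y‖ := one_mul _
    have hvy : v (y + R) = v y := by
      refine le_antisymm ?_ ?_
      · by_contra hlt
        push_neg at hlt
        have h2 : v y < v (-R) := by rw [hvneg]; exact hvylt
        have h3 := hvadd (y + R) (-R)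
        rw [add_neg_cancel_right] at h3
        exact absurd h3 (not_le.mpr (lt_min hlt h2))
      · have h4 := hvadd y R
        rwa [min_eq_left hvylt.le] at h4
    refine ⟨hS _, ?_, ?_⟩
    · rw [hkey, hvy]
    · constructor
      · intro h; exact absurd h hvyt
      · intro h
        exfalso
        have h5 : y + R = 0 := by rw [← hkey, h, sub_self]
        have h6 := (hv0 (y + R)).mpr h5
        rw [hvy] at h6
        exact hvyt h6


end
end

section
/- Let n ≥ 1 be an integer, let ζ_{p^n} be a primitive p^n-th root of unity in a finite extension K of ℚ_p with valuation v_p normalized by v_p(p) = 1, and set x = ζ_{p^n} − 1. Then v_p(π_i(x)) = p^i·v_p(x) for all 0 ≤ i < n, and π_i(x) = 0 for all i ≥ n, where π_i(x) denotes the convergent evaluation of π_i(T) at T = x. -/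
set_option linter.unusedSectionVars false
set_option maxHeartbeats 1000000


open PowerSeries

noncomputable section

variable (p : ℕ) [Fact p.Prime]

/-! ### Auxiliary lemmas -/

section Statement4Aux

variable {p}
variable {K : Type*} [NormedField K]

lemma st4_norm_finset_sum_le (na : ∀ y z : K, ‖y + z‖ ≤ max ‖y‖ ‖z‖)
    {ι : Type*} (s : Finset ι) (f : ι → K) {C : ℝ} (hC : 0 ≤ C)
    (h : ∀ i ∈ s, ‖f i‖ ≤ C) : ‖∑ i ∈ s, f i‖ ≤ C := by
  classical
  induction s using Finset.induction_on with
  | empty => simpa using hC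
  | @insert a s hx ih =>
    rw [Finset.sum_insert hx]
    refine (na _ _).trans (max_le (h a (Finset.mem_insert_self a s)) ?_)
    exact ih fun i hi => h i (Finset.mem_insert_of_mem hi)

lemma st4_norm_tsum_le (na : ∀ y z : K, ‖y + z‖ ≤ max ‖y‖ ‖z‖) [CompleteSpace K]
    {f : ℕ → K} (hf : Summable f) {C : ℝ} (hC : 0 ≤ C)
    (h : ∀ j, ‖f j‖ ≤ C) : ‖∑' j, f j‖ ≤ C := by
  have h1 := hf.hasSum.tendsto_sum_nat
  have h2 : Filter.Tendsto (fun n => ‖∑ j ∈ Finset.range n, f j‖) Filter.atTop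
      (nhds ‖∑' j, f j‖) := (continuous_norm.tendsto _).comp h1
  refine le_of_tendsto h2 (Filter.Eventually.of_forall fun n => ?_)
  exact st4_norm_finset_sum_le na _ _ hC fun i _ => h i

lemma st4_norm_add_eq_of_lt (na : ∀ y z : K, ‖y + z‖ ≤ max ‖y‖ ‖z‖)
    {y r : K} (h : ‖r‖ < ‖y‖) : ‖y + r‖ = ‖y‖ := by
  refine le_antisymm ((na _ _).trans (max_le le_rfl h.le)) ?_
  by_contra hlt
  push_neg at hlt
  have hb : ‖y‖ ≤ max ‖y + r‖ ‖-r‖ := by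
    simpa using na (y + r) (-r)
  rw [norm_neg] at hb
  rcases max_cases ‖y + r‖ ‖r‖ with ⟨he, _⟩ | ⟨he, _⟩ <;> rw [he] at hb <;>
    [exact absurd hb (not_le.mpr hlt); exact absurd hb (not_le.mpr h)]

/-! Evaluation of power series over `ℤ_[p]`. -/

variable [CompleteSpace K]

/-- Evaluation of a power series over ℤ_p at a point of K via a ring hom. -/
def evalPS (φ : ℤ_[p] →+* K) (x : K) (f : PowerSeries ℤ_[p]) : K :=
  ∑' j : ℕ, φ (PowerSeries.coeff j f) * x ^ j

variable {φ : ℤ_[p] →+* K} {x : K}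

lemma st4_term_norm_le (hφ : ∀ a, ‖φ a‖ ≤ 1) (f : PowerSeries ℤ_[p]) (j : ℕ) :
    ‖φ (PowerSeries.coeff j f) * x ^ j‖ ≤ ‖x‖ ^ j := by
  rw [norm_mul, norm_pow]
  exact mul_le_of_le_one_left (by positivity) (hφ _)

lemma st4_summable_norm_eval (hφ : ∀ a, ‖φ a‖ ≤ 1) (hx : ‖x‖ < 1) (f : PowerSeries ℤ_[p]) :
    Summable fun j : ℕ => ‖φ (PowerSeries.coeff j f) * x ^ j‖ :=
  Summable.of_nonneg_of_le (fun _ => norm_nonneg _) (st4_term_norm_le hφ f)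
    (summable_geometric_of_lt_one (norm_nonneg x) hx)

lemma st4_summable_eval (hφ : ∀ a, ‖φ a‖ ≤ 1) (hx : ‖x‖ < 1) (f : PowerSeries ℤ_[p]) :
    Summable fun j : ℕ => φ (PowerSeries.coeff j f) * x ^ j :=
  (st4_summable_norm_eval hφ hx f).of_norm

lemma evalPS_one : evalPS φ x 1 = 1 := by
  rw [evalPS, tsum_eq_single 0]
  · simp
  · intro j hj
    simp [PowerSeries.coeff_one, hj]

lemma evalPS_mul (hφ : ∀ a, ‖φ a‖ ≤ 1) (hx : ‖x‖ < 1) (f g : PowerSeries ℤ_[p]) :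
    evalPS φ x (f * g) = evalPS φ x f * evalPS φ x g := by
  rw [evalPS, evalPS, evalPS,
    tsum_mul_tsum_eq_tsum_sum_antidiagonal_of_summable_norm
      (st4_summable_norm_eval hφ hx f) (st4_summable_norm_eval hφ hx g)]
  refine tsum_congr fun n => ?_
  rw [PowerSeries.coeff_mul, map_sum, Finset.sum_mul]
  refine Finset.sum_congr rfl fun kl hkl => ?_
  rw [Finset.HasAntidiagonal.mem_antidiagonal] at hkl
  rw [map_mul, ← hkl, pow_add]
  ring

lemma evalPS_pow (hφ : ∀ a, ‖φ a‖ ≤ 1) (hx : ‖x‖ < 1) (f : PowerSeries ℤ_[p]) (k : ℕ) :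
    evalPS φ x (f ^ k) = (evalPS φ x f) ^ k := by
  induction k with
  | zero => simpa using evalPS_one
  | succ k ih => rw [pow_succ, pow_succ, evalPS_mul hφ hx, ih]

lemma evalPS_one_add_X : evalPS φ x (1 + X) = 1 + x := by
  rw [evalPS, tsum_eq_sum (s := {0, 1}) ?_]
  · rw [Finset.sum_pair (by norm_num)]
    simp [PowerSeries.coeff_one]
  · intro j hj
    simp only [Finset.mem_insert, Finset.mem_singleton, not_or] at hj
    simp [PowerSeries.coeff_one, PowerSeries.coeff_X, hj.1, hj.2]

lemma st4_norm_evalPS_le (na : ∀ y z : K, ‖y + z‖ ≤ max ‖y‖ ‖z‖)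
    (hφ : ∀ a, ‖φ a‖ ≤ 1) (hx : ‖x‖ < 1) {f : PowerSeries ℤ_[p]} {m : ℕ}
    (hf : ∀ j < m, PowerSeries.coeff j f = 0) :
    ‖evalPS φ x f‖ ≤ ‖x‖ ^ m := by
  refine st4_norm_tsum_le na (st4_summable_eval hφ hx f) (by positivity) fun j => ?_
  rcases lt_or_ge j m with hj | hj
  · simp only [hf j hj, map_zero, zero_mul, norm_zero]
    positivity
  · exact (st4_term_norm_le hφ f j).trans
      (pow_le_pow_of_le_one (norm_nonneg x) hx.le hj)

lemma evalPS_comp (hφ : ∀ a, ‖φ a‖ ≤ 1) (hx : ‖x‖ < 1)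
    (f g : PowerSeries ℤ_[p]) (hg0 : PowerSeries.constantCoeff g = 0) :
    evalPS φ x (psComp g f)
      = ∑' k : ℕ, φ (PowerSeries.coeff k f) * (evalPS φ x g) ^ k := by
  classical
  set F : ℕ → ℕ → K := fun k n =>
    φ (PowerSeries.coeff k f) * (φ (PowerSeries.coeff n (g ^ k)) * x ^ n) with hF
  have hgk : ∀ k n, n < k → PowerSeries.coeff n (g ^ k) = 0 := by
    intro k n hnk
    have hdvd : (X : PowerSeries ℤ_[p]) ^ k ∣ g ^ k :=
      pow_dvd_pow_of_dvd (PowerSeries.X_dvd_iff.mpr hg0) k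
    exact (PowerSeries.X_pow_dvd_iff.mp hdvd) n hnk
  set s := Real.sqrt ‖x‖ with hs
  have hs0 : 0 ≤ s := Real.sqrt_nonneg _
  have hssq : s ^ 2 = ‖x‖ := Real.sq_sqrt (norm_nonneg x)
  have hs1 : s < 1 := by nlinarith
  have hFb : ∀ kn : ℕ × ℕ, ‖F kn.1 kn.2‖ ≤ s ^ kn.1 * s ^ kn.2 := by
    rintro ⟨k, n⟩
    rcases lt_or_ge n k with h | h
    · simp only [hF, hgk k n h, map_zero, zero_mul, mul_zero, norm_zero]
      positivity
    · have h1 : ‖F k n‖ ≤ ‖x‖ ^ n := by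
        simp only [hF, norm_mul, norm_pow]
        calc ‖φ _‖ * (‖φ _‖ * ‖x‖ ^ n) ≤ 1 * (1 * ‖x‖ ^ n) := by
              gcongr <;> [exact hφ _; exact hφ _]
          _ = ‖x‖ ^ n := by ring
      refine h1.trans ?_
      have hxs : ‖x‖ ^ n = s ^ n * s ^ n := by
        rw [← pow_add, ← hssq, ← pow_mul]; ring_nf
      rw [hxs]
      exact mul_le_mul_of_nonneg_right
        (pow_le_pow_of_le_one hs0 hs1.le h) (pow_nonneg hs0 n)
  have hsum2 : Summable fun kn : ℕ × ℕ => s ^ kn.1 * s ^ kn.2 :=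
    (summable_geometric_of_lt_one hs0 hs1).mul_of_nonneg
      (summable_geometric_of_lt_one hs0 hs1)
      (fun _ => by positivity) (fun _ => by positivity)
  have hFsum : Summable fun kn : ℕ × ℕ => F kn.1 kn.2 :=
    Summable.of_norm_bounded hsum2 hFb
  have hrow : ∀ k, Summable fun n => F k n := fun k => hFsum.prod_factor k
  have hcol : ∀ n, Summable fun k => F k n := fun n => hFsum.prod_symm.prod_factor n
  have hswap : ∑' (n : ℕ) (k : ℕ), F k n = ∑' (k : ℕ) (n : ℕ), F k n :=
    Summable.tsum_comm' hFsum hrow hcol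
  have hleft : evalPS φ x (psComp g f) = ∑' (n : ℕ) (k : ℕ), F k n := by
    rw [evalPS]
    refine tsum_congr fun n => ?_
    rw [tsum_eq_sum (s := Finset.range (n + 1))
      (fun k hk => by
        have hnk : n < k := by simpa using Finset.mem_range.not.mp hk
        simp [hF, hgk k n hnk])]
    rw [psComp, PowerSeries.coeff_mk, map_sum, Finset.sum_mul]
    exact Finset.sum_congr rfl fun k _ => by rw [hF, map_mul, mul_assoc]
  have hright : ∀ k, ∑' n, F k n
      = φ (PowerSeries.coeff k f) * (evalPS φ x g) ^ k := by
    intro k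
    rw [hF, tsum_mul_left, ← evalPS_pow hφ hx, evalPS]
  rw [hleft, hswap]
  exact tsum_congr hright

/-! Valuation lemmas. -/

variable {v : K → WithTop ℚ}

section VAux

variable (hv0 : ∀ y : K, v y = ⊤ ↔ y = 0)
  (hvmul : ∀ y z : K, v (y * z) = v y + v z)
  (hvadd : ∀ y z : K, min (v y) (v z) ≤ v (y + z))
  (hvnorm : ∀ y z : K, v y ≤ v z ↔ ‖z‖ ≤ ‖y‖)

include hv0 hvmul in
lemma st4_v_one : v (1 : K) = 0 := by
  have h := hvmul 1 1
  rw [mul_one] at h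
  have hne : v (1 : K) ≠ ⊤ := by
    rw [Ne, hv0]; exact one_ne_zero
  lift v (1 : K) to ℚ using hne with a ha
  rw [← WithTop.coe_add, WithTop.coe_inj] at h
  have ha0 : a = 0 := by linarith
  exact_mod_cast ha0

include hvnorm in
lemma st4_v_eq_iff {y z : K} : v y = v z ↔ ‖y‖ = ‖z‖ := by
  constructor
  · intro h
    exact le_antisymm ((hvnorm z y).mp h.ge) ((hvnorm y z).mp h.le)
  · intro h
    exact le_antisymm ((hvnorm y z).mpr h.ge) ((hvnorm z y).mpr h.le)

include hvadd hvnorm in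
lemma st4_v_na : ∀ y z : K, ‖y + z‖ ≤ max ‖y‖ ‖z‖ := by
  intro y z
  rcases le_total (v y) (v z) with h | h
  · have h2 := (min_eq_left h).symm.trans_le (hvadd y z)
    exact le_max_of_le_left ((hvnorm y (y + z)).mp h2)
  · have h2 := (min_eq_right h).symm.trans_le (hvadd y z)
    exact le_max_of_le_right ((hvnorm z (y + z)).mp h2)

include hv0 hvmul in
lemma st4_v_pow (y : K) (m : ℕ) : v (y ^ m) = m • v y := by
  induction m with
  | zero => simpa using st4_v_one hv0 hvmul
  | succ m ih => rw [pow_succ, hvmul, ih, succ_nsmul]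

include hv0 hvmul in
lemma st4_v_prod {ι : Type*} (s : Finset ι) (f : ι → K) :
    v (∏ i ∈ s, f i) = ∑ i ∈ s, v (f i) := by
  classical
  induction s using Finset.induction_on with
  | empty => simpa using st4_v_one hv0 hvmul
  | @insert a s ha ih => rw [Finset.prod_insert ha, Finset.sum_insert ha, hvmul, ih]

include hv0 hvadd in
lemma st4_v_sum_nonneg {ι : Type*} (s : Finset ι) (f : ι → K)
    (h : ∀ i ∈ s, 0 ≤ v (f i)) : 0 ≤ v (∑ i ∈ s, f i) := by
  classical
  induction s using Finset.induction_on with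
  | empty =>
    simp only [Finset.sum_empty]
    rw [show v (0 : K) = ⊤ from (hv0 0).mpr rfl]
    exact le_top
  | @insert a s ha ih =>
    rw [Finset.sum_insert ha]
    refine le_trans (le_min (h a (Finset.mem_insert_self a s)) ?_) (hvadd _ _)
    exact ih fun i hi => h i (Finset.mem_insert_of_mem hi)

include hv0 hvmul in
lemma st4_v_root_zero {y : K} {N : ℕ} (hN : 0 < N) (hy : y ^ N = 1) : v y = 0 := by
  have h := st4_v_pow hv0 hvmul y N
  rw [hy, st4_v_one hv0 hvmul] at h
  have hyne : y ≠ 0 := by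
    intro h0
    rw [h0, zero_pow hN.ne'] at hy
    exact zero_ne_one hy
  have hne : v y ≠ ⊤ := fun ht => hyne ((hv0 y).mp ht)
  lift v y to ℚ using hne with a ha
  rw [← WithTop.coe_nsmul] at h
  have h' : (0 : ℚ) = N • a := by exact_mod_cast h
  rw [nsmul_eq_mul] at h'
  have ha0 : a = 0 := by
    replace h' := mul_eq_zero.mp h'.symm
    rcases h' with h' | h'
    · exact absurd h' (Nat.cast_ne_zero.mpr hN.ne')
    · exact h'
  simp [ha0]

include hv0 hvmul hvadd in
lemma st4_v_one_sub_pow_le {α : K} (hα : v α = 0) (j : ℕ) :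
    v (1 - α) ≤ v (1 - α ^ j) := by
  have hid : (1 : K) - α ^ j = (1 - α) * ∑ k ∈ Finset.range j, α ^ k := by
    have h := geom_sum_mul α j
    linear_combination h
  rw [hid, hvmul]
  refine le_add_of_nonneg_right (st4_v_sum_nonneg hv0 hvadd _ _ fun k _ => ?_)
  rw [st4_v_pow hv0 hvmul, hα, smul_zero]

include hv0 hvmul hvadd hvnorm in
lemma st4_v_primroot (hp : p.Prime) (hvp : v ((p : ℕ) : K) = 1) {m : ℕ} (hm : 1 ≤ m)
    {ξ : K} (hξ : IsPrimitiveRoot ξ (p ^ m)) :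
    v (ξ - 1) = ((((p ^ m : ℕ).totient : ℚ)⁻¹ : ℚ) : WithTop ℚ) := by
  classical
  have hpos : 0 < p ^ m := pow_pos hp.pos m
  have hone : 1 < p ^ m := Nat.one_lt_pow (by omega) hp.one_lt
  have hcyc := Polynomial.cyclotomic_eq_prod_X_sub_primitiveRoots hξ
  have heval1 : Polynomial.eval 1 (Polynomial.cyclotomic (p ^ m) K) = (p : K) := by
    have h := Polynomial.eval_one_cyclotomic_prime_pow (R := K) (p := p) (k := m - 1)
    rwa [Nat.sub_add_cancel hm] at h
  have hprod : ((p : ℕ) : K) = ∏ μ ∈ primitiveRoots (p ^ m) K, (1 - μ) := by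
    rw [← heval1, hcyc, Polynomial.eval_prod]
    simp
  have hvξ : v ξ = 0 := st4_v_root_zero hv0 hvmul hpos hξ.pow_eq_one
  have hv_each : ∀ μ ∈ primitiveRoots (p ^ m) K, v (1 - μ) = v (1 - ξ) := by
    intro μ hμ
    have hμp : IsPrimitiveRoot μ (p ^ m) := (mem_primitiveRoots hpos).mp hμ
    haveI : NeZero (p ^ m) := ⟨hpos.ne'⟩
    obtain ⟨j, _, hj⟩ := hξ.eq_pow_of_pow_eq_one hμp.pow_eq_one
    obtain ⟨l, _, hl⟩ := hμp.eq_pow_of_pow_eq_one hξ.pow_eq_one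
    have hvμ : v μ = 0 := st4_v_root_zero hv0 hvmul hpos hμp.pow_eq_one
    refine le_antisymm ?_ ?_
    · rw [← hl]
      exact st4_v_one_sub_pow_le hv0 hvmul hvadd hvμ l
    · rw [← hj]
      exact st4_v_one_sub_pow_le hv0 hvmul hvadd hvξ j
  have hsum : v ((p : ℕ) : K) = ∑ μ ∈ primitiveRoots (p ^ m) K, v (1 - μ) := by
    rw [hprod, st4_v_prod hv0 hvmul]
  rw [Finset.sum_congr rfl hv_each, Finset.sum_const, hξ.card_primitiveRoots, hvp] at hsum
  have hne : v (1 - ξ) ≠ ⊤ := by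
    rw [Ne, hv0, sub_eq_zero]
    exact fun h => hξ.ne_one hone h.symm
  have heq : v (ξ - 1) = v (1 - ξ) := by
    rw [st4_v_eq_iff hvnorm, norm_sub_rev]
  rw [heq]
  lift v (1 - ξ) to ℚ using hne with q hq
  rw [← WithTop.coe_nsmul] at hsum
  have h1 : (1 : ℚ) = (p ^ m).totient • q := by exact_mod_cast hsum
  rw [nsmul_eq_mul] at h1
  have ht0 : ((p ^ m).totient : ℚ) ≠ 0 := by
    exact_mod_cast (Nat.totient_pos.mpr hpos).ne'
  have hqv : q = ((p ^ m).totient : ℚ)⁻¹ := by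
    field_simp
    linarith [h1]
  rw [hqv]

end VAux

/-! Artin–Hasse coefficients. -/

lemma coeff_psComp {R : Type*} [CommSemiring R] (g f : PowerSeries R) (n : ℕ) :
    PowerSeries.coeff n (psComp g f)
      = ∑ k ∈ Finset.range (n + 1),
          PowerSeries.coeff k f * PowerSeries.coeff n (g ^ k) := by
  rw [psComp, PowerSeries.coeff_mk]

lemma coeff_artinHasse_zero : PowerSeries.coeff 0 (artinHasse p) = 1 := by
  rw [artinHasse, coeff_psComp]
  simp [PowerSeries.coeff_exp]

lemma coeff_artinHasse_one : PowerSeries.coeff 1 (artinHasse p) = 1 := by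
  rw [artinHasse, coeff_psComp]
  rw [Finset.sum_range_succ, Finset.sum_range_one]
  have h0 : PowerSeries.coeff 1 ((lseries p) ^ 0) = 0 := by
    simp [PowerSeries.coeff_one]
  have h1 : PowerSeries.coeff 1 ((lseries p) ^ 1) = 1 := by
    rw [pow_one, lseries, PowerSeries.coeff_mk, if_pos ⟨0, (pow_zero p).symm⟩]
    norm_num
  rw [h0, h1]
  simp [PowerSeries.coeff_exp]

lemma coeff_Ep_zero {Ep : PowerSeries ℤ_[p]} (hEp : IsArtinHasseZp p Ep) :
    PowerSeries.coeff 0 Ep = 1 := by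
  have h := congrArg (PowerSeries.coeff 0) hEp
  rw [PowerSeries.coeff_map, PowerSeries.coeff_map, coeff_artinHasse_zero] at h
  have h2 : ((PowerSeries.coeff 0 Ep : ℤ_[p]) : ℚ_[p]) = 1 := by
    rw [map_one] at h
    exact h
  exact Subtype.coe_injective (h2.trans (by simp))

lemma coeff_Ep_one {Ep : PowerSeries ℤ_[p]} (hEp : IsArtinHasseZp p Ep) :
    PowerSeries.coeff 1 Ep = 1 := by
  have h := congrArg (PowerSeries.coeff 1) hEp
  rw [PowerSeries.coeff_map, PowerSeries.coeff_map, coeff_artinHasse_one] at h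
  have h2 : ((PowerSeries.coeff 1 Ep : ℤ_[p]) : ℚ_[p]) = 1 := by
    rw [map_one] at h
    exact h
  exact Subtype.coe_injective (h2.trans (by simp))

end Statement4Aux


/-- let `ζ` be a primitive `p^n`-th root of unity (`n ≥ 1`) in a finite
extension `K` of `ℚ_p` with normalized valuation `v` (with `v(p)=1`), and set
`x = ζ − 1`.  Then the evaluations `π_i(x)` converge, `v(π_i(x)) = p^i·v(x)` for
`0 ≤ i < n`, and `π_i(x) = 0` for `i ≥ n`. -/
theorem statement4
    (Ep : PowerSeries ℤ_[p]) (hEp : IsArtinHasseZp p Ep)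
    (πfam : ℕ → PowerSeries ℤ_[p]) (hπ : IsPiFamily p Ep πfam)
    (K : Type*) [NormedField K] [CompleteSpace K]
    [Algebra ℚ_[p] K] [FiniteDimensional ℚ_[p] K]
    (hiso : ∀ y : ℚ_[p], ‖algebraMap ℚ_[p] K y‖ = ‖y‖)
    (v : K → WithTop ℚ)
    (hv0 : ∀ y : K, v y = ⊤ ↔ y = 0)
    (hvmul : ∀ y z : K, v (y * z) = v y + v z)
    (hvadd : ∀ y z : K, min (v y) (v z) ≤ v (y + z))
    (hvp : v ((p : K)) = 1)
    (hvnorm : ∀ y z : K, v y ≤ v z ↔ ‖z‖ ≤ ‖y‖)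
    (n : ℕ) (hn : 1 ≤ n) (ζ : K) (hζ : IsPrimitiveRoot ζ (p ^ n)) :
    (∀ i : ℕ, Summable (fun j : ℕ =>
      algebraMap ℚ_[p] K (PadicInt.Coe.ringHom (PowerSeries.coeff j (πfam i)))
        * (ζ - 1) ^ j))
    ∧ (∀ i : ℕ, i < n →
        v (∑' j : ℕ,
            algebraMap ℚ_[p] K (PadicInt.Coe.ringHom (PowerSeries.coeff j (πfam i)))
              * (ζ - 1) ^ j)
          = (((p : ℚ) ^ i : ℚ) : WithTop ℚ) * v (ζ - 1))
    ∧ (∀ i : ℕ, n ≤ i →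
        (∑' j : ℕ,
            algebraMap ℚ_[p] K (PadicInt.Coe.ringHom (PowerSeries.coeff j (πfam i)))
              * (ζ - 1) ^ j) = 0) := by
  classical
  have hp : p.Prime := Fact.out
  set φ : ℤ_[p] →+* K := (algebraMap ℚ_[p] K).comp PadicInt.Coe.ringHom with hφdef
  have hφ : ∀ a : ℤ_[p], ‖φ a‖ ≤ 1 := by
    intro a
    rw [hφdef, RingHom.comp_apply, hiso]
    exact PadicInt.norm_le_one a
  have na := st4_v_na hvadd hvnorm
  have hvx : v (ζ - 1) = ((((p ^ n : ℕ).totient : ℚ)⁻¹ : ℚ) : WithTop ℚ) :=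
    st4_v_primroot hv0 hvmul hvadd hvnorm hp hvp hn hζ
  have htpos : ∀ m : ℕ, (0 : ℚ) < ((p ^ m : ℕ).totient : ℚ) := fun m => by
    exact_mod_cast Nat.totient_pos.mpr (pow_pos hp.pos m)
  have hx1 : ‖ζ - 1‖ < 1 := by
    have h0 : v (1 : K) < v (ζ - 1) := by
      rw [st4_v_one hv0 hvmul, hvx]
      exact_mod_cast inv_pos.mpr (htpos n)
    have h2 : ¬ v (ζ - 1) ≤ v (1 : K) := not_le.mpr h0
    have h3 : ¬ ‖(1 : K)‖ ≤ ‖ζ - 1‖ := fun hc => h2 ((hvnorm _ _).mpr hc)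
    simpa [norm_one] using not_le.mp h3
  have heval : ∀ i : ℕ, (∑' j : ℕ,
      algebraMap ℚ_[p] K (PadicInt.Coe.ringHom (PowerSeries.coeff j (πfam i)))
        * (ζ - 1) ^ j) = evalPS φ (ζ - 1) (πfam i) := fun i => rfl
  -- the key analysis for each i
  have key : ∀ i : ℕ, ∃ r : K,
      ζ ^ p ^ i - 1 = evalPS φ (ζ - 1) (πfam i) + r
      ∧ ‖r‖ ≤ ‖evalPS φ (ζ - 1) (πfam i)‖ ^ 2
      ∧ ‖evalPS φ (ζ - 1) (πfam i)‖ < 1 := by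
    intro i
    set y := evalPS φ (ζ - 1) (πfam i) with hydef
    have hπ0 := (hπ i).1
    have hyle : ‖y‖ ≤ ‖ζ - 1‖ ^ 1 :=
      st4_norm_evalPS_le na hφ hx1 (f := πfam i) (m := 1) (fun j hj => by
        have hj0 : j = 0 := by omega
        rw [hj0]
        simpa [PowerSeries.coeff_zero_eq_constantCoeff] using hπ0)
    have hy1 : ‖y‖ < 1 := lt_of_le_of_lt (by simpa using hyle) hx1
    have hcomp := evalPS_comp hφ hx1 Ep (πfam i) hπ0
    rw [(hπ i).2] at hcomp
    have hlhs : evalPS φ (ζ - 1) ((1 + X) ^ p ^ i) = ζ ^ p ^ i := by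
      rw [evalPS_pow hφ hx1, evalPS_one_add_X]
      ring_nf
    set g : ℕ → K := fun k => φ (PowerSeries.coeff k Ep) * y ^ k with hg
    have hgsum : Summable g := by
      refine Summable.of_norm_bounded
        (summable_geometric_of_lt_one (norm_nonneg y) hy1) (fun k => ?_)
      rw [hg, norm_mul, norm_pow]
      exact mul_le_of_le_one_left (by positivity) (hφ _)
    have hsum2 : Summable fun k => g (k + 1) := (summable_nat_add_iff 1).mpr hgsum
    have hsum3 : Summable fun k => g (k + 2) := (summable_nat_add_iff 2).mpr hgsum
    have hdec : ∑' k, g k = g 0 + (g 1 + ∑' k, g (k + 2)) := by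
      rw [Summable.tsum_eq_zero_add hgsum, Summable.tsum_eq_zero_add hsum2]
    have h5 : ζ ^ p ^ i = ∑' k, g k := by
      rw [← hlhs]
      exact hcomp
    refine ⟨∑' k, g (k + 2), ?_, ?_, hy1⟩
    · have hg0 : g 0 = 1 := by
        rw [hg]
        simp [coeff_Ep_zero hEp]
      have hg1 : g 1 = y := by
        rw [hg]
        simp [coeff_Ep_one hEp]
      rw [h5, hdec, hg0, hg1]
      ring
    · refine st4_norm_tsum_le na hsum3 (by positivity) fun k => ?_
      have hb : ‖g (k + 2)‖ ≤ ‖y‖ ^ (k + 2) := by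
        rw [hg, norm_mul, norm_pow]
        exact mul_le_of_le_one_left (by positivity) (hφ _)
      exact hb.trans (pow_le_pow_of_le_one (norm_nonneg y) hy1.le (by omega))
  refine ⟨fun i => st4_summable_eval hφ hx1 (πfam i), ?_, ?_⟩
  · -- case i < n
    intro i hi
    obtain ⟨r, hr1, hr2, hy1⟩ := key i
    rw [heval i]
    set y := evalPS φ (ζ - 1) (πfam i) with hydef
    have hζi : ζ ^ p ^ i ≠ 1 :=
      hζ.pow_ne_one_of_pos_of_lt (pow_pos hp.pos i).ne' (Nat.pow_lt_pow_right hp.one_lt hi)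
    have hyne : y ≠ 0 := by
      intro h0
      rw [h0] at hr1 hr2
      have hr0 : r = 0 := by
        have : ‖r‖ ≤ 0 := by simpa using hr2
        simpa using norm_le_zero_iff.mp this
      rw [hr0] at hr1
      apply hζi
      have : ζ ^ p ^ i - 1 = 0 := by simpa using hr1
      exact sub_eq_zero.mp this
    have hypos : 0 < ‖y‖ := norm_pos_iff.mpr hyne
    have hrlt : ‖r‖ < ‖y‖ := lt_of_le_of_lt hr2 (by nlinarith)
    have hnorm_eq : ‖ζ ^ p ^ i - 1‖ = ‖y‖ := by
      rw [hr1]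
      exact st4_norm_add_eq_of_lt na hrlt
    have hveq : v y = v (ζ ^ p ^ i - 1) := (st4_v_eq_iff hvnorm).mpr hnorm_eq.symm
    have hprim2 : IsPrimitiveRoot (ζ ^ p ^ i) (p ^ (n - i)) := by
      refine hζ.pow (pow_pos hp.pos n) ?_
      rw [← pow_add]
      congr 1
      omega
    have hv2 : v (ζ ^ p ^ i - 1)
        = ((((p ^ (n - i) : ℕ).totient : ℚ)⁻¹ : ℚ) : WithTop ℚ) :=
      st4_v_primroot hv0 hvmul hvadd hvnorm hp hvp (by omega) hprim2
    rw [hveq, hv2, hvx, ← WithTop.coe_mul, WithTop.coe_inj]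
    -- ℚ arithmetic
    have hnat : (p ^ n).totient = p ^ i * (p ^ (n - i)).totient := by
      rw [Nat.totient_prime_pow hp (by omega), Nat.totient_prime_pow hp (by omega),
        ← mul_assoc, ← pow_add]
      congr 2
      omega
    have ht1 : ((p ^ n : ℕ).totient : ℚ) ≠ 0 := (htpos n).ne'
    have ht2 : ((p ^ (n - i) : ℕ).totient : ℚ) ≠ 0 := (htpos (n - i)).ne'
    rw [hnat] at ht1 ⊢
    push_cast at ht1 ⊢
    field_simp
    rw [div_self (pow_ne_zero _ (Nat.cast_ne_zero.mpr hp.ne_zero))]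
  · -- case n ≤ i
    intro i hi
    obtain ⟨r, hr1, hr2, hy1⟩ := key i
    rw [heval i]
    set y := evalPS φ (ζ - 1) (πfam i) with hydef
    have hζ1 : ζ ^ p ^ i = 1 := by
      have hpow : p ^ i = p ^ n * p ^ (i - n) := by
        rw [← pow_add]
        congr 1
        omega
      rw [hpow, pow_mul, hζ.pow_eq_one, one_pow]
    rw [hζ1, sub_self] at hr1
    by_contra hyne
    have hypos : 0 < ‖y‖ := norm_pos_iff.mpr hyne
    have hrlt : ‖r‖ < ‖y‖ := lt_of_le_of_lt hr2 (by nlinarith)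
    have h6 : ‖y + r‖ = ‖y‖ := st4_norm_add_eq_of_lt na hrlt
    rw [← hr1] at h6
    simp only [norm_zero] at h6
    exact hyne (norm_eq_zero.mp h6.symm)


end
end

section
/- For an integer i ≥ 0, let π̄_i ∈ 𝔽_p[[T]] denote the coefficient-wise reduction of π_i(T) modulo p. Then E(π̄_i) = 1 + T^{p^i} in 𝔽_p[[T]], and π̄_i ∈ T^{p^i}·(1 + T·𝔽_p[[T]]); in particular the T-adic valuation of π̄_i equals p^i. -/
open PowerSeries

noncomputable section

section Aux

open PowerSeries Finset

variable {R S : Type*} [CommRing R] [CommRing S]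

lemma AH.coeff_pow_eq_zero {g : R⟦X⟧} (hg : constantCoeff g = 0)
    {m k : ℕ} (h : m < k) : coeff m (g ^ k) = 0 :=
  PowerSeries.X_pow_dvd_iff.mp (pow_dvd_pow_of_dvd (X_dvd_iff.mpr hg) k) m h

lemma AH.map_psComp (φ : R →+* S) (g f : R⟦X⟧) :
    PowerSeries.map φ (psComp g f)
      = psComp (PowerSeries.map φ g) (PowerSeries.map φ f) := by
  ext n
  simp [psComp, PowerSeries.coeff_map, map_sum, ← map_pow]

lemma AH.constantCoeff_psComp (g f : R⟦X⟧) :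
    constantCoeff (psComp g f) = coeff 0 f := by
  have : coeff 0 (psComp g f) = coeff 0 f := by
    simp [psComp]
  simpa using this

lemma AH.psComp_split {g : R⟦X⟧} (hg : constantCoeff g = 0) (f : R⟦X⟧) :
    psComp g f = C (coeff 0 f)
      + g * psComp g (PowerSeries.mk fun n => coeff (n + 1) f) := by
  set c : ℕ → R := fun n => coeff (n + 1) f with hc
  ext n
  have key : coeff n (g * psComp g (PowerSeries.mk c))
      = ∑ k ∈ Finset.range n, c k * coeff n (g ^ (k + 1)) := by
    rw [coeff_mul]
    have step1 : ∀ x ∈ Finset.HasAntidiagonal.antidiagonal n,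
        coeff x.1 g * coeff x.2 (psComp g (PowerSeries.mk c))
        = ∑ k ∈ Finset.range (n + 1), c k * (coeff x.1 g * coeff x.2 (g ^ k)) := by
      intro x hx
      have hx2 : x.2 ≤ n := by have := Finset.HasAntidiagonal.mem_antidiagonal.mp hx; omega
      rw [psComp, PowerSeries.coeff_mk, Finset.mul_sum]
      rw [← Finset.sum_subset
        (Finset.range_subset_range.mpr (by omega) : Finset.range (x.2 + 1) ⊆ Finset.range (n + 1)) ?_]
      · apply Finset.sum_congr rfl
        intro k _
        simp only [PowerSeries.coeff_mk]
        ring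
      · intro k hk hk'
        have hlt : x.2 < k := by
          simp only [Finset.mem_range] at hk hk'
          omega
        rw [AH.coeff_pow_eq_zero hg hlt]
        ring
    rw [Finset.sum_congr rfl step1, Finset.sum_comm]
    have step2 : ∀ k ∈ Finset.range (n + 1),
        (∑ x ∈ Finset.HasAntidiagonal.antidiagonal n, c k * (coeff x.1 g * coeff x.2 (g ^ k)))
        = c k * coeff n (g ^ (k + 1)) := by
      intro k _
      rw [← Finset.mul_sum, ← coeff_mul, ← pow_succ']
    rw [Finset.sum_congr rfl step2, Finset.sum_range_succ,
      AH.coeff_pow_eq_zero hg (Nat.lt_succ_self n), mul_zero, add_zero]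
  rw [map_add, key, coeff_C]
  rw [psComp, PowerSeries.coeff_mk, Finset.sum_range_succ']
  have h0 : coeff 0 f * coeff n (g ^ 0) = if n = 0 then coeff 0 f else 0 := by
    rw [pow_zero, PowerSeries.coeff_one]
    split_ifs <;> simp
  rw [h0, add_comm]

end Aux

lemma AH.coeff_zero_artinHasse (p : ℕ) : PowerSeries.coeff 0 (artinHasse p) = 1 := by
  simp [artinHasse, psComp, PowerSeries.coeff_exp]

lemma AH.coeff_one_artinHasse (p : ℕ) : PowerSeries.coeff 1 (artinHasse p) = 1 := by
  classical
  have h1 : PowerSeries.coeff 1 (lseries p) = 1 := by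
    rw [lseries, PowerSeries.coeff_mk]
    rw [if_pos (⟨0, by simp⟩ : ∃ i : ℕ, 1 = p ^ i)]
    norm_num
  simp [artinHasse, psComp, Finset.sum_range_succ, PowerSeries.coeff_exp, h1]

variable (p : ℕ) [Fact p.Prime]

/-- let `π̄_i ∈ 𝔽_p[[T]]` be the coefficient-wise reduction of `π_i(T)`
modulo `p`.  Then `E(π̄_i) = 1 + T^{p^i}` in `𝔽_p[[T]]`, and
`π̄_i ∈ T^{p^i}·(1 + T·𝔽_p[[T]])`; in particular the `T`-adic valuation of `π̄_i`
equals `p^i`. -/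
theorem statement6
    (Ep : PowerSeries ℤ_[p]) (hEp : IsArtinHasseZp p Ep)
    (πfam : ℕ → PowerSeries ℤ_[p]) (hπ : IsPiFamily p Ep πfam) (i : ℕ) :
    psComp (PowerSeries.map (PadicInt.toZMod) (πfam i)) (PowerSeries.map (PadicInt.toZMod) Ep)
        = 1 + X ^ p ^ i
    ∧ (∃ u : PowerSeries (ZMod p),
        PowerSeries.map (PadicInt.toZMod) (πfam i) = X ^ p ^ i * (1 + X * u))
    ∧ (PowerSeries.map (PadicInt.toZMod) (πfam i)).order = (p ^ i : ℕ) := by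
  classical
  set g : PowerSeries (ZMod p) := PowerSeries.map (PadicInt.toZMod) (πfam i) with hg
  set Eb : PowerSeries (ZMod p) := PowerSeries.map (PadicInt.toZMod) Ep with hEb
  have hCinj : Function.Injective ((PowerSeries.C (R := ZMod p))) := fun a b h => by
    simpa using congrArg (PowerSeries.constantCoeff) h
  haveI : CharP (PowerSeries (ZMod p)) p :=
    charP_of_injective_ringHom hCinj p
  -- constant coefficient of g is 0
  have hg0 : PowerSeries.constantCoeff g = 0 := by
    have h := (hπ i).1
    have : PowerSeries.coeff 0 g = 0 := by
      rw [hg, PowerSeries.coeff_map, ← PowerSeries.coeff_zero_eq_constantCoeff_apply] at *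
      rw [h, map_zero]
    simpa using this
  -- first conjunct
  have hcomp : psComp g Eb = 1 + X ^ p ^ i := by
    have h := congrArg (PowerSeries.map (PadicInt.toZMod)) (hπ i).2
    rw [AH.map_psComp] at h
    rw [← hg, ← hEb] at h
    rw [h, map_pow, map_add, map_one, PowerSeries.map_X, add_pow_char_pow, one_pow]
  -- coefficients of Ep
  have hEpc : ∀ n, ((PowerSeries.coeff n Ep : ℤ_[p]) : ℚ_[p])
      = ((PowerSeries.coeff n (artinHasse p) : ℚ) : ℚ_[p]) := by
    intro n
    have h := congrArg (PowerSeries.coeff n) hEp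
    rw [PowerSeries.coeff_map, PowerSeries.coeff_map] at h
    exact h
  have hEp0 : PowerSeries.coeff 0 Ep = 1 := by
    have h := hEpc 0
    rw [AH.coeff_zero_artinHasse] at h
    exact Subtype.coe_injective (by simpa using h)
  have hEp1 : PowerSeries.coeff 1 Ep = 1 := by
    have h := hEpc 1
    rw [AH.coeff_one_artinHasse] at h
    exact Subtype.coe_injective (by simpa using h)
  have hE0 : PowerSeries.coeff 0 Eb = 1 := by
    rw [hEb, PowerSeries.coeff_map, hEp0, map_one]
  have hE1 : PowerSeries.coeff 1 Eb = 1 := by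
    rw [hEb, PowerSeries.coeff_map, hEp1, map_one]
  -- split E(g) = 1 + g * h
  set F : PowerSeries (ZMod p) :=
    PowerSeries.mk (fun n => PowerSeries.coeff (n + 1) Eb) with hF
  have hsplit := AH.psComp_split hg0 Eb
  rw [hE0, map_one, ← hF] at hsplit
  have hXp : (X : PowerSeries (ZMod p)) ^ p ^ i = g * psComp g F := by
    have h := hcomp
    rw [hsplit] at h
    exact (add_left_cancel h).symm
  have hh0 : PowerSeries.constantCoeff (psComp g F) = 1 := by
    rw [AH.constantCoeff_psComp, hF, PowerSeries.coeff_mk, zero_add, hE1]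
  obtain ⟨U, hU⟩ : IsUnit (psComp g F) := by
    rw [PowerSeries.isUnit_iff_constantCoeff, hh0]; exact isUnit_one
  have hgX : g = X ^ p ^ i * (↑U⁻¹ : PowerSeries (ZMod p)) := by
    calc g = g * (↑U * ↑U⁻¹) := by rw [Units.mul_inv, mul_one]
    _ = (g * ↑U) * ↑U⁻¹ := by ring
    _ = X ^ p ^ i * ↑U⁻¹ := by rw [hU, ← hXp]
  have hv1 : PowerSeries.constantCoeff (↑U⁻¹ : PowerSeries (ZMod p)) = 1 := by
    have h := congrArg (PowerSeries.constantCoeff) U.mul_inv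
    rw [map_mul, map_one, hU, hh0, one_mul] at h
    exact h
  obtain ⟨u, hu⟩ : (X : PowerSeries (ZMod p)) ∣ (↑U⁻¹ - 1) := by
    rw [PowerSeries.X_dvd_iff, map_sub, hv1, map_one, sub_self]
  have hv : (↑U⁻¹ : PowerSeries (ZMod p)) = 1 + X * u := by
    rw [← hu]; ring
  have hgu : g = X ^ p ^ i * (1 + X * u) := by rw [hgX, hv]
  refine ⟨hcomp, ⟨u, hgu⟩, ?_⟩
  -- order
  have h1u : PowerSeries.order (1 + X * u) = ((0 : ℕ) : ℕ∞) := by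
    rw [PowerSeries.order_eq_nat]
    constructor
    · simpa using (by simp [map_add, map_mul] :
        PowerSeries.coeff 0 (1 + X * u) = 1) ▸ (one_ne_zero : (1 : ZMod p) ≠ 0)
    · intro j hj; omega
  rw [hgu, PowerSeries.order_mul, PowerSeries.order_X_pow, h1u]
  simp


end
end
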